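/- Let G be a finite graph with a partial acyclic orientation in which every vertex has out-degree at most D and at most d incident unoriented edges. Suppose each vertex selects a color in {1,...,k} used by the minimum number of its out-neighbors (parents). Then for each color class i, the subgraph induced by vertices of color i has arboricity at most ⌊D/k⌋ + d. -/

import Mathlib

open Finset
open scoped Classical

/-- `G` admits a partition of its edge set into at most `a` forests. -/
def HasForestDecomp {V : Type*} (G : SimpleGraph V) (a : ℕ) : Prop :=
  ∃ F : Fin a → SimpleGraph V,
    (∀ i, F i ≤ G ∧ (F i).IsAcyclic) ∧
    ∀ e ∈ G.edgeSet, ∃! i, e ∈ (F i).edgeSet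

/-- The arboricity of a graph: the minimum number of forests partitioning its edge set. -/
noncomputable def arboricity {V : Type*} (G : SimpleGraph V) : ℕ :=
  sInf {a | HasForestDecomp G a}

lemma isAcyclic_of_rank {W : Type*} (H : SimpleGraph W) (r : W → ℕ)
    (hr : ∀ ⦃u v⦄, H.Adj u v → r u ≠ r v)
    (h1 : ∀ ⦃v u w⦄, H.Adj v u → H.Adj v w → r u < r v → r w < r v → u = w) :
    H.IsAcyclic := by
  intro v c hc
  obtain ⟨m, hm, hmax⟩ := Finset.exists_max_image c.support.toFinset r ⟨v, by simp⟩
  rw [List.mem_toFinset] at hm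
  have hc' := hc.rotate hm
  have hmax' : ∀ x ∈ (c.rotate m hm).support, r x ≤ r m := by
    intro x hx
    rw [SimpleGraph.Walk.support_eq_cons] at hx
    rcases List.eq_or_mem_of_mem_cons hx with h | h
    · exact h ▸ le_refl _
    · have : x ∈ c.support.tail := ((SimpleGraph.Walk.support_rotate c m hm).mem_iff).mp h
      exact hmax x (List.mem_toFinset.mpr (List.mem_of_mem_tail this))
  set c' := c.rotate m hm with hc'eq
  obtain ⟨b, hadj, p, hcons⟩ := SimpleGraph.Walk.not_nil_iff.mp hc'.not_nil
  -- last dart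
  have hlen3 : 3 ≤ c'.length := hc'.three_le_length
  have hdne : c'.darts ≠ [] := by
    have : c'.darts.length = c'.length := SimpleGraph.Walk.length_darts c'
    intro h; rw [h] at this; simp at this; omega
  set dl := c'.darts.getLast hdne with hdl
  have hdlsnd : dl.snd = m := by
    rw [hdl, SimpleGraph.Walk.getLast_darts_eq_lastDart]; rfl
  have hdlmem : dl ∈ c'.darts := List.getLast_mem hdne
  have hdladj : H.Adj dl.fst m := hdlsnd ▸ dl.adj
  have hbfst : dl.fst ∈ c'.support := SimpleGraph.Walk.dart_fst_mem_support_of_mem_darts c' hdlmem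
  have hbsup : b ∈ c'.support := by
    rw [hcons]; simp
  have hrb : r b < r m := lt_of_le_of_ne (hmax' b hbsup) (hr hadj.symm)
  have hrb' : r dl.fst < r m := lt_of_le_of_ne (hmax' _ hbfst) (hr hdladj)
  have hbb : b = dl.fst := h1 hadj hdladj.symm hrb hrb'
  -- now the edge s(m,b) appears at head and last of c'.edges
  have hnodup : c'.edges.Nodup := hc'.edges_nodup
  have hedges : c'.edges = s(m, b) :: p.edges := by rw [hcons]; rfl
  have hpne : p.edges ≠ [] := by
    have hl : p.edges.length = p.length := p.length_edges
    have : c'.length = p.length + 1 := by rw [hcons]; simp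
    intro h; rw [h] at hl; simp at hl; omega
  have hcne : c'.edges ≠ [] := by rw [hedges]; simp
  have hlast : c'.edges.getLast hcne = dl.edge := by
    have : c'.edges = c'.darts.map SimpleGraph.Dart.edge := rfl
    rw [hdl]
    simp only [this]
    rw [List.getLast_map]
  have hlast2 : c'.edges.getLast hcne = s(m, b) := by
    have hprod : dl.toProd = (b, m) := Prod.ext hbb.symm hdlsnd
    rw [hlast, SimpleGraph.Dart.edge, hprod]
    exact Sym2.eq_swap
  have hmem : s(m,b) ∈ p.edges := by
    have h1' : c'.edges.getLast? = some s(m,b) := by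
      rw [List.getLast?_eq_getLast hcne, hlast2]
    rw [hedges, List.getLast?_cons, List.getLast?_eq_getLast hpne] at h1'
    simp only [Option.getD_some] at h1'
    have := Option.some.inj h1'
    exact this ▸ List.getLast_mem hpne
  rw [hedges] at hnodup
  exact (List.nodup_cons.mp hnodup).1 hmem

lemma exists_rank {V : Type*} [Fintype V] [DecidableEq V] (o : V → V → Prop)
    (hacyc : ∀ v, ¬ Relation.TransGen o v v) :
    ∃ r : V → ℕ, Function.Injective r ∧ ∀ u v, o v u → r u < r v := by
  classical
  set N := Fintype.card V with hN
  set e : V ≃ Fin N := Fintype.equivFin V with he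
  set desc : V → Finset V := fun v => Finset.univ.filter (fun u => Relation.ReflTransGen o v u)
    with hdescdef
  have hdesc : ∀ u v, o v u → (desc u).card < (desc v).card := by
    intro u v hvu
    apply Finset.card_lt_card
    have hsub' : desc u ⊆ desc v := by
      intro w hw
      simp only [hdescdef, Finset.mem_filter, Finset.mem_univ, true_and] at hw ⊢
      exact Relation.ReflTransGen.head hvu hw
    rw [Finset.ssubset_iff_of_subset hsub']
    refine ⟨v, ?_, ?_⟩
    · simp only [hdescdef, Finset.mem_filter, Finset.mem_univ, true_and]
      exact Relation.ReflTransGen.refl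
    · simp only [hdescdef, Finset.mem_filter, Finset.mem_univ, true_and]
      intro hw
      exact hacyc v (Relation.TransGen.head' hvu hw)
  refine ⟨fun v => N * (desc v).card + (e v : ℕ), ?_, ?_⟩
  · intro u v huv
    have h1 : (e u : ℕ) < N := (e u).isLt
    have h2 : (e v : ℕ) < N := (e v).isLt
    have hmod : (e u : ℕ) = (e v : ℕ) := by
      have := congrArg (· % N) huv
      simpa [Nat.mul_add_mod, Nat.mod_eq_of_lt h1, Nat.mod_eq_of_lt h2] using this
    exact e.injective (Fin.ext hmod)
  · intro u v h
    have h1 : (e u : ℕ) < N := (e u).isLt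
    have h2 : N * (desc u).card + (e u : ℕ) < N * ((desc u).card + 1) := by
      rw [Nat.mul_add, Nat.mul_one]; omega
    have h3 : N * ((desc u).card + 1) ≤ N * (desc v).card :=
      Nat.mul_le_mul_left N (hdesc u v h)
    exact lt_of_lt_of_le h2 (le_trans h3 (Nat.le_add_right _ _))

theorem stmt10 {V : Type*} [Fintype V] [DecidableEq V] (G : SimpleGraph V)
    [DecidableRel G.Adj] (D d k : ℕ) (hk : 0 < k)
    (o : V → V → Prop) [DecidableRel o]
    (hsub : ∀ u v, o u v → G.Adj u v)
    (hanti : ∀ u v, ¬ (o u v ∧ o v u))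
    (hacyc : ∀ v, ¬ Relation.TransGen o v v)
    (houtdeg : ∀ v, (Finset.univ.filter (fun u => o v u)).card ≤ D)
    (hdef : ∀ v, (Finset.univ.filter (fun u => G.Adj v u ∧ ¬ o v u ∧ ¬ o u v)).card ≤ d)
    (col : V → Fin k)
    (hmin : ∀ v (j : Fin k),
      (Finset.univ.filter (fun u => o v u ∧ col u = col v)).card ≤
        (Finset.univ.filter (fun u => o v u ∧ col u = j)).card) :
    ∀ i : Fin k, arboricity (G.induce {v | col v = i}) ≤ D / k + d := by
  intro i
  classical
  obtain ⟨r, hrinj, hro⟩ := exists_rank o hacyc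
  -- the color class
  set S : Set V := {v | col v = i} with hSdef
  set H : SimpleGraph ↥S := G.induce S with hH
  have hHadj : ∀ u w : ↥S, H.Adj u w ↔ G.Adj ↑u ↑w := by
    intro u w; rw [hH]; exact SimpleGraph.comap_adj
  set Dn : ↥S → Finset ↥S :=
    fun v => Finset.univ.filter (fun u => H.Adj v u ∧ r ↑u < r ↑v) with hDndef
  have hDn : ∀ v, (Dn v).card ≤ D / k + d := by
    intro v
    set A := Finset.univ.filter (fun u => o ↑v u ∧ col u = col (↑v : V)) with hA
    set B := Finset.univ.filter (fun u => G.Adj ↑v u ∧ ¬ o ↑v u ∧ ¬ o u ↑v) with hB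
    have hAB : (Dn v).card ≤ (A ∪ B).card := by
      apply Finset.card_le_card_of_injOn (Subtype.val : ↥S → V)
      · intro u hu
        simp only [Finset.mem_coe, hDndef, Finset.mem_filter, Finset.mem_univ, true_and] at hu
        obtain ⟨hadj, hlt⟩ := hu
        have hGadj : G.Adj ↑v ↑u := (hHadj v u).mp hadj
        rw [Finset.mem_coe, Finset.mem_union]
        by_cases h1 : o ↑v ↑u
        · left
          rw [hA, Finset.mem_filter]
          exact ⟨Finset.mem_univ _, h1, u.2.trans v.2.symm⟩
        · right
          rw [hB, Finset.mem_filter]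
          refine ⟨Finset.mem_univ _, hGadj, h1, fun h2 => ?_⟩
          exact absurd (hro _ _ h2) (not_lt.mpr hlt.le)
      · intro a _ b _ hab
        exact Subtype.ext hab
    have hAcard : A.card ≤ D / k := by
      rw [Nat.le_div_iff_mul_le hk]
      have hsum : ∑ j : Fin k,
          (Finset.univ.filter (fun u => o (↑v : V) u ∧ col u = j)).card =
          (Finset.univ.filter (fun u => o (↑v : V) u)).card := by
        rw [Finset.card_eq_sum_card_fiberwise
          (f := col) (t := Finset.univ) (fun x _ => Finset.mem_univ _)]
        refine Finset.sum_congr rfl fun j _ => ?_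
        rw [Finset.filter_filter]
      calc A.card * k = ∑ _j : Fin k, A.card := by
              rw [Finset.sum_const, Finset.card_univ, Fintype.card_fin, smul_eq_mul, mul_comm]
        _ ≤ ∑ j : Fin k,
              (Finset.univ.filter (fun u => o (↑v : V) u ∧ col u = j)).card :=
              Finset.sum_le_sum fun j _ => hmin ↑v j
        _ = (Finset.univ.filter (fun u => o (↑v : V) u)).card := hsum
        _ ≤ D := houtdeg ↑v
    have hBcard : B.card ≤ d := hdef ↑v
    calc (Dn v).card ≤ (A ∪ B).card := hAB
      _ ≤ A.card + B.card := Finset.card_union_le _ _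
      _ ≤ D / k + d := Nat.add_le_add hAcard hBcard
  -- indexing of down-edges
  set idx : ↥S → ↥S → ℕ :=
    fun v u => ((Dn v).filter (fun w : ↥S => r ↑w < r ↑u)).card with hidxdef
  have hidxlt : ∀ v u, u ∈ Dn v → idx v u < D / k + d := by
    intro v u hu
    have h1 : (Dn v).filter (fun w : ↥S => r ↑w < r ↑u) ⊂ Dn v := by
      rw [Finset.ssubset_iff_of_subset (Finset.filter_subset _ _)]
      refine ⟨u, hu, fun hmem => ?_⟩
      rw [Finset.mem_filter] at hmem
      exact lt_irrefl _ hmem.2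
    exact lt_of_lt_of_le (Finset.card_lt_card h1) (hDn v)
  have hidxmono : ∀ v (u w : ↥S), u ∈ Dn v → w ∈ Dn v → r ↑u < r ↑w →
      idx v u < idx v w := by
    intro v u w hu hw hlt
    apply Finset.card_lt_card
    have hss : (Dn v).filter (fun x : ↥S => r ↑x < r ↑u) ⊆ (Dn v).filter (fun x : ↥S => r ↑x < r ↑w) := by
      intro x hx
      rw [Finset.mem_filter] at hx ⊢
      exact ⟨hx.1, lt_trans hx.2 hlt⟩
    rw [Finset.ssubset_iff_of_subset hss]
    refine ⟨u, ?_, fun hmem => ?_⟩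
    · rw [Finset.mem_filter]; exact ⟨hu, hlt⟩
    · rw [Finset.mem_filter] at hmem
      exact lt_irrefl _ hmem.2
  have hidxinj : ∀ v (u w : ↥S), u ∈ Dn v → w ∈ Dn v → idx v u = idx v w → u = w := by
    intro v u w hu hw hEq
    by_contra hne
    have hrne : r ↑u ≠ r ↑w := fun h => hne (Subtype.ext (hrinj h))
    rcases lt_or_gt_of_ne hrne with hlt | hlt
    · exact absurd hEq (hidxmono v u w hu hw hlt).ne
    · exact absurd hEq.symm (hidxmono v w u hw hu hlt).ne
  -- the forests
  set F : Fin (D / k + d) → SimpleGraph ↥S := fun j =>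
    { Adj := fun u w => H.Adj u w ∧
        ((r ↑u < r ↑w ∧ idx w u = (j : ℕ)) ∨ (r ↑w < r ↑u ∧ idx u w = (j : ℕ)))
      symm := by
        constructor
        intro u w hadj
        exact ⟨hadj.1.symm, hadj.2.symm⟩
      loopless := ⟨fun u hadj => H.loopless.irrefl u hadj.1⟩ } with hF
  have hFadj : ∀ (j : Fin (D / k + d)) (u w : ↥S), (F j).Adj u w ↔
      (H.Adj u w ∧
        ((r ↑u < r ↑w ∧ idx w u = (j : ℕ)) ∨ (r ↑w < r ↑u ∧ idx u w = (j : ℕ)))) := by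
    intro j u w; rw [hF]
  have hdec : HasForestDecomp (G.induce {v | col v = i}) (D / k + d) := by
    refine ⟨F, fun j => ⟨?_, ?_⟩, ?_⟩
    · intro u w hadj
      exact ((hFadj j u w).mp hadj).1
    · apply isAcyclic_of_rank (F j) (fun u => r ↑u)
      · intro u w hadj hEq
        exact (F j).ne_of_adj hadj (Subtype.ext (hrinj hEq))
      · intro v u w hvu hvw hu hw
        rw [hFadj] at hvu hvw
        have hu' : u ∈ Dn v := by
          rw [hDndef, Finset.mem_filter]
          exact ⟨Finset.mem_univ _, hvu.1, hu⟩
        have hw' : w ∈ Dn v := by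
          rw [hDndef, Finset.mem_filter]
          exact ⟨Finset.mem_univ _, hvw.1, hw⟩
        have hju : idx v u = (j : ℕ) := by
          rcases hvu.2 with ⟨h1, _⟩ | ⟨_, h2⟩
          · exact absurd h1 (not_lt.mpr hu.le)
          · exact h2
        have hjw : idx v w = (j : ℕ) := by
          rcases hvw.2 with ⟨h1, _⟩ | ⟨_, h2⟩
          · exact absurd h1 (not_lt.mpr hw.le)
          · exact h2
        exact hidxinj v u w hu' hw' (hju.trans hjw.symm)
    · have key : ∀ u w : ↥S, H.Adj u w → r ↑w < r ↑u →
          ∃! j : Fin (D / k + d), s(u, w) ∈ (F j).edgeSet := by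
        intro u w hadj hlt
        have hwD : w ∈ Dn u := by
          rw [hDndef, Finset.mem_filter]
          exact ⟨Finset.mem_univ _, hadj, hlt⟩
        refine ⟨⟨idx u w, hidxlt u w hwD⟩, ?_, ?_⟩
        · show s(u, w) ∈ (F ⟨idx u w, hidxlt u w hwD⟩).edgeSet
          rw [SimpleGraph.mem_edgeSet, hFadj]
          exact ⟨hadj, Or.inr ⟨hlt, rfl⟩⟩
        · intro j hj
          rw [SimpleGraph.mem_edgeSet, hFadj] at hj
          rcases hj.2 with ⟨h1, _⟩ | ⟨_, h2⟩
          · exact absurd h1 (not_lt.mpr hlt.le)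
          · exact Fin.ext h2.symm
      intro ed hed
      induction ed using Sym2.ind with
      | _ u w =>
        rw [SimpleGraph.mem_edgeSet] at hed
        have hed' : H.Adj u w := hed
        have hne : r ↑u ≠ r ↑w := fun h =>
          (G.ne_of_adj ((hHadj u w).mp hed')) (hrinj h)
        rcases lt_or_gt_of_ne hne with h | h
        · have := key w u hed'.symm h
          rwa [Sym2.eq_swap] at this
        · exact key u w hed' h
  exact Nat.sInf_le hdec
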